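/- Let a₁ ∈ ℂ be not a nonpositive integer, and let η = Σ_{i=1}^n a_i dlog z_i act on germs at 0 of logarithmic differential forms on the polydisc Δⁿ with poles along the coordinate hyperplanes. Define the operator δ on a monomial form z^m dlog z_{i₁} ∧ … ∧ dlog z_{i_k} (with i₁ < … < i_k) by δ(α) = (m₁ + a₁)⁻¹ z^m · ι(α) where ι is contraction with the vector field z₁ ∂/∂z₁ (so ι kills the form unless i₁ = 1, in which case it deletes dlog z₁). Then for every such monomial form α one has (d+η)δα + δ(d+η)α = α. -/
import Mathlib


set_option synthInstance.maxHeartbeats 1000000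
set_option maxHeartbeats 1000000

noncomputable section

open ExteriorAlgebra

/-- The exterior algebra on the span of the logarithmic generators
`dlog z₀, …, dlog z_n` (modelled on the coordinate vectors of `ℂ^{n+1}`). -/
abbrev LogExt (n : ℕ) := ExteriorAlgebra ℂ (Fin (n + 1) → ℂ)

/-- Logarithmic forms on the polydisc (algebraic model): finite combinations
`Σ_m z^m ω_m` with `ω_m` in the exterior algebra on the `dlog z_i`. -/
abbrev LogForms (n : ℕ) := (Fin (n + 1) → ℕ) →₀ LogExt n

/-- The generator `dlog z_i`. -/
def dlogz (n : ℕ) (i : Fin (n + 1)) : LogExt n := ι ℂ (Pi.single i 1)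

/-- Exterior derivative: `d(z^m ω) = Σ_i m_i z^m dlog z_i ∧ ω` for `ω` a product
of `dlog`'s (which are closed). -/
def dExt (n : ℕ) (α : LogForms n) : LogForms n :=
  α.sum fun m ω => Finsupp.single m (∑ i, (m i : ℂ) • (dlogz n i * ω))

/-- Multiplication by `η = Σ_i a_i dlog z_i`. -/
def etaMul (n : ℕ) (a : Fin (n + 1) → ℂ) (α : LogForms n) : LogForms n :=
  α.sum fun m ω => Finsupp.single m (∑ i, a i • (dlogz n i * ω))

/-- The homotopy operator `δ`: on `z^m ω` it is `(m₁ + a₁)⁻¹ z^m ι_θ(ω)`, where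
`ι_θ` is contraction with the vector field `z₁ ∂/∂z₁`, i.e. the interior product
with the coordinate functional dual to `dlog z₁` (index `0` here). -/
def deltaOp (n : ℕ) (a : Fin (n + 1) → ℂ) (α : LogForms n) : LogForms n :=
  α.sum fun m ω => Finsupp.single m
    (((m 0 : ℂ) + a 0)⁻¹ •
      (CliffordAlgebra.contractLeft
        (LinearMap.proj 0 : (Fin (n + 1) → ℂ) →ₗ[ℂ] ℂ) ω))

/-- **Lemma `beanT`, homotopy formula.** If `a₁` is not a nonpositive
integer, then for every monomial logarithmic form
`α = z^m dlog z_{i₁} ∧ … ∧ dlog z_{i_k}` (with `i₁ < … < i_k`) one has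
`(d+η)δα + δ(d+η)α = α`. -/
theorem homotopy_formula (n : ℕ) (a : Fin (n + 1) → ℂ)
    (ha : ∀ k : ℕ, a 0 ≠ -(k : ℂ))
    (m : Fin (n + 1) → ℕ) (k : ℕ) (I : Fin k → Fin (n + 1)) (hI : StrictMono I)
    (α : LogForms n)
    (hα : α = Finsupp.single m ((List.ofFn fun s => dlogz n (I s)).prod)) :
    (dExt n (deltaOp n a α) + etaMul n a (deltaOp n a α))
      + deltaOp n a (dExt n α + etaMul n a α) = α := by
  subst hα
  set f : (Fin (n + 1) → ℂ) →ₗ[ℂ] ℂ := LinearMap.proj 0 with hf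
  set ι₀ : LogExt n →ₗ[ℂ] LogExt n := CliffordAlgebra.contractLeft f with hi0
  set ω : LogExt n := (List.ofFn fun s => dlogz n (I s)).prod with hω
  set c : ℂ := ((m 0 : ℂ) + a 0)⁻¹ with hc
  have hne : ((m 0 : ℂ) + a 0) ≠ 0 := by
    intro h
    exact ha (m 0) (by linear_combination h)
  have hd : ∀ x : LogExt n, dExt n (Finsupp.single m x)
      = Finsupp.single m (∑ i, (m i : ℂ) • (dlogz n i * x)) := by
    intro x
    rw [dExt, Finsupp.sum_single_index]
    simp
  have he : ∀ x : LogExt n, etaMul n a (Finsupp.single m x)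
      = Finsupp.single m (∑ i, a i • (dlogz n i * x)) := by
    intro x
    rw [etaMul, Finsupp.sum_single_index]
    simp
  have hdel : ∀ x : LogExt n, deltaOp n a (Finsupp.single m x)
      = Finsupp.single m (c • ι₀ x) := by
    intro x
    rw [deltaOp, Finsupp.sum_single_index]
    simp
  have h2 : deltaOp n a (dExt n (Finsupp.single m ω) + etaMul n a (Finsupp.single m ω))
      = Finsupp.single m (c • ι₀ (∑ i, (m i : ℂ) • (dlogz n i * ω)
          + ∑ i, a i • (dlogz n i * ω))) := by
    rw [hd, he, ← Finsupp.single_add, hdel]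
  rw [hdel, hd, he, h2, ← Finsupp.single_add, ← Finsupp.single_add]
  refine congrArg _ ?_
  have hkey : ∀ i : Fin (n + 1), dlogz n i * ι₀ ω + ι₀ (dlogz n i * ω)
      = (if i = 0 then (1 : ℂ) else 0) • ω := by
    intro i
    have h := CliffordAlgebra.contractLeft_ι_mul (d := f) (Pi.single i (1 : ℂ)) ω
    have hfv : f (Pi.single i (1 : ℂ)) = if i = 0 then (1 : ℂ) else 0 := by
      simp [hf, LinearMap.proj, Pi.single_apply, eq_comm]
    rw [dlogz]
    rw [show (ι ℂ (Pi.single i (1:ℂ)) : LogExt n)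
        = CliffordAlgebra.ι 0 (Pi.single i (1:ℂ)) from rfl] at *
    rw [hi0, h, hfv]
    abel
  have : (∑ i, (m i : ℂ) • (dlogz n i * (c • ι₀ ω))
        + ∑ i, a i • (dlogz n i * (c • ι₀ ω)))
      + c • ι₀ (∑ i, (m i : ℂ) • (dlogz n i * ω) + ∑ i, a i • (dlogz n i * ω))
      = c • ∑ i, ((m i : ℂ) + a i) • (dlogz n i * ι₀ ω + ι₀ (dlogz n i * ω)) := by
    rw [map_add, map_sum, map_sum]
    simp only [map_smul, mul_smul_comm, smul_comm _ c, smul_add, Finset.smul_sum,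
      add_smul, Finset.sum_add_distrib]
  rw [this]
  simp only [hkey]
  rw [Finset.sum_congr rfl (fun i _ => by rw [smul_smul])]
  simp only [mul_ite, mul_one, mul_zero, ite_smul, zero_smul]
  rw [Finset.sum_ite_eq' Finset.univ (0 : Fin (n+1)) (fun i => ((m i : ℂ) + a i) • ω)]
  simp only [Finset.mem_univ, if_true]
  rw [smul_smul, hc, inv_mul_cancel₀ hne, one_smul]
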